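/- arXiv:2605.17114 — 3 statements merged into one kernel-verified Lean document; each statement's English description precedes it below -/
import Mathlib

section
/- Let 2 < q < ∞ and define C_q = (2π)^{1/2} ((q−1)/(q−2))^{1/2} [ (q/(q−1))^{(q−2)/(2(q−1))} + (q/(q−1))^{−q/(2(q−1))} ]. Then for every f ∈ L¹(ℝ²) ∩ L^q(ℝ²) and every x ∈ ℝ², (1/(2π)) ∫_{ℝ²} |f(y)|/|x−y| dy ≤ C_q ‖f‖_{L¹}^{(q−2)/(2(q−1))} ‖f‖_{L^q}^{q/(2(q−1))}. In particular, ‖∇((1/(2π)) ln(1/|·|) * f)‖_{L^∞} ≤ C_q ‖f‖_{L¹}^{(q−2)/(2(q−1))} ‖f‖_{L^q}^{q/(2(q−1))}. -/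
open MeasureTheory
open scoped ENNReal

open Metric Set
open scoped Real

section RieszAux

lemma half_div_rpow {a p : ℝ} (ha : 0 < a) : (a/2) ^ (-p) = a ^ (-p) * 2 ^ p := by
  rw [Real.div_rpow ha.le (by norm_num), Real.rpow_neg (by norm_num : (0:ℝ) ≤ 2),
    div_inv_eq_mul]

lemma term_formula {R p : ℝ} (hR : 0 < R) : ∀ j : ℕ,
    (R/2^(j+1)) ^ (-p) * ((R/2^j)^2 * Real.pi) =
      (Real.pi * R ^ (2-p) * 2 ^ p) * (2 ^ p / 4)^j := by
  intro j
  induction j with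
  | zero =>
    simp only [zero_add, pow_one, pow_zero, div_one, mul_one]
    rw [half_div_rpow hR]
    have h : R ^ (-p) * R ^ 2 = R ^ (2 - p) := by
      rw [← Real.rpow_natCast R 2, ← Real.rpow_add hR]
      norm_num
      ring_nf
    linear_combination (2 ^ p * Real.pi) * h
  | succ j ih =>
    have h1 : R/2^(j+1+1) = (R/2^(j+1))/2 := by rw [pow_succ]; ring
    have h2 : (R/2^(j+1))^2 = (R/2^j)^2/4 := by rw [pow_succ]; ring
    rw [h1, half_div_rpow (by positivity), h2, pow_succ ((2:ℝ) ^ p / 4) j]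
    linear_combination (2 ^ p / 4) * ih

lemma kernel_bound {R p : ℝ} (hR : 0 < R) (hp1 : 1 < p) (hp2 : p < 2)
    (x : EuclideanSpace ℝ (Fin 2)) :
    ∫⁻ y in ball x R, ((ENNReal.ofReal ‖x - y‖)⁻¹) ^ p ∂volume ≤
      ENNReal.ofReal (Real.pi * R ^ (2-p) * 2 ^ p / (1 - 2 ^ p / 4)) := by
  have hp0 : 0 < p := by linarith
  -- translation
  have htrans : ∫⁻ y in ball x R, ((ENNReal.ofReal ‖x - y‖)⁻¹) ^ p ∂volume
      = ∫⁻ z in ball (0 : EuclideanSpace ℝ (Fin 2)) R,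
          ((ENNReal.ofReal ‖z‖)⁻¹) ^ p ∂volume := by
    have hmp := MeasureTheory.Measure.measurePreserving_sub_left
      (volume : Measure (EuclideanSpace ℝ (Fin 2))) x
    have hpre : (fun t : EuclideanSpace ℝ (Fin 2) => x - t) ⁻¹' (ball 0 R) = ball x R := by
      ext y
      simp [mem_ball, dist_eq_norm, norm_sub_rev]
    rw [← hpre]
    exact hmp.setLIntegral_comp_preimage_emb (MeasurableEquiv.subLeft x).measurableEmbedding
      (fun z => ((ENNReal.ofReal ‖z‖)⁻¹) ^ p) (ball 0 R)
  rw [htrans]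
  set r : ℕ → ℝ := fun j => R / 2 ^ j with hr
  have hrpos : ∀ j, 0 < r j := fun j => by positivity
  set Ann : ℕ → Set (EuclideanSpace ℝ (Fin 2)) :=
    fun j => ball 0 (r j) \ ball 0 (r (j+1)) with hAnn
  -- covering
  have hrmono : ∀ n : ℕ, r (n+1) ≤ r n := by
    intro n
    simp only [hr]
    exact div_le_div_of_nonneg_left hR.le (by positivity)
      (pow_le_pow_right₀ one_le_two (Nat.le_succ n))
  have hsub : ball (0 : EuclideanSpace ℝ (Fin 2)) R ⊆ {0} ∪ ⋃ j, Ann j := by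
    intro z hz
    rw [mem_ball_zero_iff] at hz
    rcases eq_or_ne z 0 with h0 | h0
    · exact Or.inl h0
    have hzpos : 0 < ‖z‖ := norm_pos_iff.2 h0
    have hex : ∃ n : ℕ, r (n+1) ≤ ‖z‖ := by
      obtain ⟨n, hn⟩ := exists_pow_lt_of_lt_one (div_pos hzpos hR) (by norm_num : (1:ℝ)/2 < 1)
      have hn' : (1/2:ℝ)^n * R < ‖z‖ := (lt_div_iff₀ hR).1 hn
      have hrn : r n = (1/2:ℝ)^n * R := by
        simp only [hr]; rw [one_div, inv_pow]; ring
      have hlt : r n < ‖z‖ := by rw [hrn]; exact hn'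
      exact ⟨n, le_trans (hrmono n) hlt.le⟩
    right
    refine mem_iUnion.2 ⟨Nat.find hex, ?_, ?_⟩
    · rw [mem_ball_zero_iff]
      rcases Nat.eq_zero_or_pos (Nat.find hex) with hJ | hJ
      · rw [hJ]; simpa [hr] using hz
      · obtain ⟨m, hm⟩ := Nat.exists_eq_succ_of_ne_zero (Nat.pos_iff_ne_zero.mp hJ)
        have := Nat.find_min hex (m := m) (by omega)
        rw [hm]
        push_neg at this
        exact this
    · rw [mem_ball_zero_iff]
      exact not_lt.2 (Nat.find_spec hex)
  -- per-annulus bound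
  have hvol : ∀ j, volume (ball (0 : EuclideanSpace ℝ (Fin 2)) (r j))
      = ENNReal.ofReal ((r j) ^ 2 * Real.pi) := by
    intro j
    rw [EuclideanSpace.volume_ball, Fintype.card_fin]
    norm_num [Real.Gamma_two, Real.sq_sqrt Real.pi_pos.le, ← ENNReal.ofReal_pow (hrpos j).le,
      ← ENNReal.ofReal_mul (pow_nonneg (hrpos j).le 2)]
  have hann : ∀ j, (∫⁻ z in Ann j, ((ENNReal.ofReal ‖z‖)⁻¹) ^ p ∂volume)
      ≤ ENNReal.ofReal ((Real.pi * R ^ (2-p) * 2 ^ p) * (2 ^ p / 4) ^ j) := by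
    intro j
    have hkey : ∀ z ∈ Ann j, ((ENNReal.ofReal ‖z‖)⁻¹) ^ p
        ≤ ENNReal.ofReal ((r (j+1)) ^ (-p)) := by
      intro z hz
      have hz1 : r (j+1) ≤ ‖z‖ := by
        have := hz.2
        rw [mem_ball_zero_iff, not_lt] at this
        exact this
      calc ((ENNReal.ofReal ‖z‖)⁻¹) ^ p = ((ENNReal.ofReal ‖z‖) ^ p)⁻¹ :=
            ENNReal.inv_rpow _ p
        _ ≤ ((ENNReal.ofReal (r (j+1))) ^ p)⁻¹ := by
            exact ENNReal.inv_le_inv.2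
              (ENNReal.rpow_le_rpow (ENNReal.ofReal_le_ofReal hz1) hp0.le)
        _ = ENNReal.ofReal ((r (j+1)) ^ (-p)) := by
            rw [ENNReal.ofReal_rpow_of_pos (hrpos (j+1)),
              ← ENNReal.ofReal_inv_of_pos (Real.rpow_pos_of_pos (hrpos (j+1)) p),
              ← Real.rpow_neg (hrpos (j+1)).le]
    calc (∫⁻ z in Ann j, ((ENNReal.ofReal ‖z‖)⁻¹) ^ p ∂volume)
        ≤ ∫⁻ _ in Ann j, ENNReal.ofReal ((r (j+1)) ^ (-p)) ∂volume :=
          setLIntegral_mono measurable_const hkey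
      _ = ENNReal.ofReal ((r (j+1)) ^ (-p)) * volume (Ann j) := setLIntegral_const _ _
      _ ≤ ENNReal.ofReal ((r (j+1)) ^ (-p)) * volume (ball (0:EuclideanSpace ℝ (Fin 2)) (r j)) :=
          mul_le_mul_right (measure_mono diff_subset) _
      _ = ENNReal.ofReal ((r (j+1)) ^ (-p)) * ENNReal.ofReal ((r j) ^ 2 * Real.pi) := by
          rw [hvol j]
      _ = ENNReal.ofReal ((r (j+1)) ^ (-p) * ((r j) ^ 2 * Real.pi)) :=
          (ENNReal.ofReal_mul (Real.rpow_nonneg (hrpos (j+1)).le _)).symm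
      _ = ENNReal.ofReal ((Real.pi * R ^ (2-p) * 2 ^ p) * (2 ^ p / 4) ^ j) := by
          rw [show (r (j+1)) ^ (-p) * ((r j) ^ 2 * Real.pi)
            = (Real.pi * R ^ (2-p) * 2 ^ p) * (2 ^ p / 4) ^ j from term_formula hR j]
  -- sum up
  have hρlt : (2:ℝ) ^ p / 4 < 1 := by
    have h := Real.rpow_lt_rpow_of_exponent_lt (x := 2) one_lt_two hp2
    rw [show (2:ℝ) ^ (2:ℝ) = (2:ℝ) ^ ((2:ℕ):ℝ) by norm_num, Real.rpow_natCast] at h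
    norm_num at h
    linarith
  have hρ0 : (0:ℝ) ≤ 2 ^ p / 4 := by positivity
  have hc0 : (0:ℝ) ≤ Real.pi * R ^ (2-p) * 2 ^ p := by positivity
  calc (∫⁻ z in ball (0 : EuclideanSpace ℝ (Fin 2)) R, ((ENNReal.ofReal ‖z‖)⁻¹) ^ p ∂volume)
      ≤ ∫⁻ z in ({0} ∪ ⋃ j, Ann j), ((ENNReal.ofReal ‖z‖)⁻¹) ^ p ∂volume :=
        lintegral_mono_set hsub
    _ ≤ (∫⁻ z in ({0} : Set (EuclideanSpace ℝ (Fin 2))), ((ENNReal.ofReal ‖z‖)⁻¹) ^ p ∂volume)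
        + ∫⁻ z in (⋃ j, Ann j), ((ENNReal.ofReal ‖z‖)⁻¹) ^ p ∂volume :=
        lintegral_union_le _ _ _
    _ = ∫⁻ z in (⋃ j, Ann j), ((ENNReal.ofReal ‖z‖)⁻¹) ^ p ∂volume := by
        rw [setLIntegral_measure_zero _ _ (measure_singleton _), zero_add]
    _ ≤ ∑' j, ∫⁻ z in Ann j, ((ENNReal.ofReal ‖z‖)⁻¹) ^ p ∂volume := lintegral_iUnion_le _ _
    _ ≤ ∑' j, ENNReal.ofReal ((Real.pi * R ^ (2-p) * 2 ^ p) * (2 ^ p / 4) ^ j) :=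
        ENNReal.tsum_le_tsum hann
    _ = ∑' j, ENNReal.ofReal (Real.pi * R ^ (2-p) * 2 ^ p) * (ENNReal.ofReal (2 ^ p / 4)) ^ j := by
        refine tsum_congr fun j => ?_
        rw [ENNReal.ofReal_mul hc0, ENNReal.ofReal_pow hρ0]
    _ = ENNReal.ofReal (Real.pi * R ^ (2-p) * 2 ^ p) * (1 - ENNReal.ofReal (2 ^ p / 4))⁻¹ := by
        rw [ENNReal.tsum_mul_left, ENNReal.tsum_geometric]
    _ = ENNReal.ofReal (Real.pi * R ^ (2-p) * 2 ^ p / (1 - 2 ^ p / 4)) := by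
        rw [show (1 : ℝ≥0∞) - ENNReal.ofReal (2 ^ p / 4) = ENNReal.ofReal (1 - 2 ^ p / 4) by
            rw [ENNReal.ofReal_sub _ hρ0, ENNReal.ofReal_one],
          ← ENNReal.ofReal_inv_of_pos (by linarith), ← ENNReal.ofReal_mul hc0, ← div_eq_mul_inv]

lemma chord_two_rpow {t : ℝ} (h1 : 1 ≤ t) (h2 : t ≤ 2) : (2:ℝ) ^ t ≤ 2 * t := by
  have hc := convexOn_exp.2 (Set.mem_univ (Real.log 2)) (Set.mem_univ (2 * Real.log 2))
      (show (0:ℝ) ≤ 2 - t by linarith) (show (0:ℝ) ≤ t - 1 by linarith)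
      (show (2 - t) + (t - 1) = 1 by ring)
  have hs : (2 - t) • Real.log 2 + (t - 1) • (2 * Real.log 2) = t * Real.log 2 := by
    simp only [smul_eq_mul]; ring
  rw [hs] at hc
  have h2t : (2:ℝ) ^ t = Real.exp (t * Real.log 2) := by
    rw [Real.rpow_def_of_pos (by norm_num)]; ring_nf
  have he1 : Real.exp (Real.log 2) = 2 := Real.exp_log (by norm_num)
  have he2 : Real.exp (2 * Real.log 2) = 4 := by
    rw [two_mul, Real.exp_add, he1]; norm_num
  rw [h2t]
  calc Real.exp (t * Real.log 2) ≤ (2 - t) • Real.exp (Real.log 2)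
        + (t - 1) • Real.exp (2 * Real.log 2) := hc
    _ = 2 * t := by rw [he1, he2]; simp only [smul_eq_mul]; ring


set_option maxHeartbeats 1600000 in
lemma real_side {q A M : ℝ} (hq : 2 < q) (hA : 0 < A) (hM : 0 < M)
    {p K R B : ℝ}
    (hp : p = q / (q-1))
    (hK : K = (2 * Real.pi * ((q-1)/(q-2))) ^ ((q-1)/q))
    (hR : R = (p * M / (K * A)) ^ (q / (2*(q-1))))
    (hB : B = Real.pi * R ^ (2-p) * 2 ^ p / (1 - 2 ^ p / 4)) :
    (1 / (2 * Real.pi)) * (A * B ^ (1/p) + M / R) ≤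
      ((2 * Real.pi) ^ ((1 : ℝ) / 2) * ((q - 1) / (q - 2)) ^ ((1 : ℝ) / 2) *
          ((q / (q - 1)) ^ ((q - 2) / (2 * (q - 1))) +
            (q / (q - 1)) ^ (-(q / (2 * (q - 1)))))) *
        M ^ ((q - 2) / (2 * (q - 1))) * A ^ (q / (2 * (q - 1))) := by
  subst hp
  have hπ := Real.pi_pos
  have ha : 0 < q - 1 := by linarith
  have hb : 0 < q - 2 := by linarith
  have hq0 : 0 < q := by linarith
  set p := q / (q-1) with hp
  have hp1 : 1 < p := by rw [hp, lt_div_iff₀ ha]; linarith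
  have hp2 : p < 2 := by rw [hp, div_lt_iff₀ ha]; linarith
  have hp0 : 0 < p := by linarith
  have hKpos : 0 < K := by rw [hK]; positivity
  have hRpos : 0 < R := by rw [hR]; positivity
  have hchord : (2:ℝ) ^ p ≤ 2 * p := chord_two_rpow hp1.le hp2.le
  have hpe : 1 - p/2 = (q-2)/(2*(q-1)) := by rw [hp]; field_simp; ring
  have hden1 : (q-2)/(2*(q-1)) ≤ 1 - 2 ^ p / 4 := by
    rw [← hpe]; linarith
  have hdenpos : (0:ℝ) < 1 - 2 ^ p / 4 := lt_of_lt_of_le (by positivity) hden1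
  have hBpos : 0 < B := by rw [hB]; positivity
  set lq := Real.log q with hlq
  set la := Real.log (q-1) with hla
  set lb := Real.log (q-2) with hlb
  set l2 := Real.log 2 with hl2
  set lπ := Real.log Real.pi with hlπdef
  set lA := Real.log A with hlA
  set lM := Real.log M with hlM
  set lD := Real.log (1 - 2 ^ p / 4) with hlD
  have hlp : Real.log p = lq - la := by rw [hp, Real.log_div hq0.ne' ha.ne']
  have hlK : Real.log K = (q-1)/q * (l2 + lπ + (la - lb)) := by
    rw [hK, Real.log_rpow (by positivity), Real.log_mul (by positivity) (by positivity),
      Real.log_mul two_ne_zero hπ.ne', Real.log_div ha.ne' hb.ne']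
  have hlR : Real.log R
      = q/(2*(q-1)) * ((lq - la) + lM - ((q-1)/q * (l2 + lπ + (la - lb)) + lA)) := by
    rw [hR, Real.log_rpow (by positivity), Real.log_div (by positivity) (by positivity),
      Real.log_mul hp0.ne' hM.ne', Real.log_mul hKpos.ne' hA.ne', hlp, hlK]
  have hlB : Real.log B = lπ + (2-p) * Real.log R + p * l2 - lD := by
    rw [hB, Real.log_div (by positivity) hdenpos.ne', Real.log_mul (by positivity) (by positivity),
      Real.log_mul hπ.ne' (by positivity), Real.log_rpow hRpos, Real.log_rpow two_pos]
  have hlDlow : lb - (l2 + la) ≤ lD := by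
    have h1 : Real.log ((q-2)/(2*(q-1))) ≤ lD := by
      rw [hlD]
      exact (Real.log_le_log_iff (by positivity) hdenpos).2 hden1
    rw [Real.log_div hb.ne' (by positivity), Real.log_mul two_ne_zero ha.ne'] at h1
    linarith
  have hlπ0 : 0 ≤ lπ := Real.log_nonneg (by nlinarith [Real.pi_gt_three])
  -- term (i)
  have hi : (1 / (2 * Real.pi)) * (A * B ^ (1/p)) ≤
      ((2 * Real.pi) ^ ((1 : ℝ) / 2) * ((q - 1) / (q - 2)) ^ ((1 : ℝ) / 2) *
        ((q / (q - 1)) ^ ((q - 2) / (2 * (q - 1))))) *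
        M ^ ((q - 2) / (2 * (q - 1))) * A ^ (q / (2 * (q - 1))) := by
    rw [← Real.log_le_log_iff (by positivity) (by positivity)]
    have e1 : Real.log ((1 / (2 * Real.pi)) * (A * B ^ (1/p)))
        = -(l2 + lπ) + (lA + (1/p) * Real.log B) := by
      rw [Real.log_mul (by positivity) (by positivity), Real.log_mul hA.ne' (by positivity),
        Real.log_rpow hBpos, one_div (2*Real.pi), Real.log_inv,
        Real.log_mul two_ne_zero hπ.ne']
    have e2 : Real.log (((2 * Real.pi) ^ ((1 : ℝ) / 2) * ((q - 1) / (q - 2)) ^ ((1 : ℝ) / 2) *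
          ((q / (q - 1)) ^ ((q - 2) / (2 * (q - 1))))) *
          M ^ ((q - 2) / (2 * (q - 1))) * A ^ (q / (2 * (q - 1))))
        = (1/2) * (l2 + lπ) + (1/2) * (la - lb)
          + ((q-2)/(2*(q-1))) * (lq - la) + ((q-2)/(2*(q-1))) * lM
          + (q/(2*(q-1))) * lA := by
      rw [Real.log_mul (by positivity) (Real.rpow_pos_of_pos hA _).ne',
        Real.log_mul (by positivity) (Real.rpow_pos_of_pos hM _).ne',
        Real.log_mul (by positivity)
          (Real.rpow_pos_of_pos (by positivity : (0:ℝ) < q/(q-1)) _).ne',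
        Real.log_mul (Real.rpow_pos_of_pos (by positivity : (0:ℝ) < 2*Real.pi) _).ne'
          (Real.rpow_pos_of_pos (by positivity : (0:ℝ) < (q-1)/(q-2)) _).ne',
        Real.log_rpow (by positivity : (0:ℝ) < 2*Real.pi),
        Real.log_rpow (by positivity : (0:ℝ) < (q-1)/(q-2)),
        Real.log_rpow (by positivity : (0:ℝ) < q/(q-1)),
        Real.log_rpow hM, Real.log_rpow hA,
        Real.log_mul two_ne_zero hπ.ne', Real.log_div ha.ne' hb.ne',
        Real.log_div hq0.ne' ha.ne']
    rw [e1, e2, hlB, hlR]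
    have hkey : (1/2) * (l2 + lπ) + (1/2) * (la - lb)
          + ((q-2)/(2*(q-1))) * (lq - la) + ((q-2)/(2*(q-1))) * lM
          + (q/(2*(q-1))) * lA
        - (-(l2 + lπ) + (lA + (1/p) * (lπ + (2-p) *
            (q/(2*(q-1)) * ((lq - la) + lM - ((q-1)/q * (l2 + lπ + (la - lb)) + lA)))
            + p * l2 - lD)))
        = lπ + (1/p) * (lD - (lb - (l2 + la))) := by
      rw [hp]
      field_simp
      ring
    have hnn : 0 ≤ (1/p) * (lD - (lb - (l2 + la))) :=
      mul_nonneg (by positivity) (by linarith)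
    linarith
  -- term (ii)
  have hii : (1 / (2 * Real.pi)) * (M / R) ≤
      ((2 * Real.pi) ^ ((1 : ℝ) / 2) * ((q - 1) / (q - 2)) ^ ((1 : ℝ) / 2) *
        ((q / (q - 1)) ^ (-(q / (2 * (q - 1)))))) *
        M ^ ((q - 2) / (2 * (q - 1))) * A ^ (q / (2 * (q - 1))) := by
    rw [← Real.log_le_log_iff (by positivity) (by positivity)]
    have e1 : Real.log ((1 / (2 * Real.pi)) * (M / R))
        = -(l2 + lπ) + (lM - Real.log R) := by
      rw [Real.log_mul (by positivity) (by positivity), Real.log_div hM.ne' hRpos.ne',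
        one_div (2*Real.pi), Real.log_inv, Real.log_mul two_ne_zero hπ.ne']
    have e2 : Real.log (((2 * Real.pi) ^ ((1 : ℝ) / 2) * ((q - 1) / (q - 2)) ^ ((1 : ℝ) / 2) *
          ((q / (q - 1)) ^ (-(q / (2 * (q - 1)))))) *
          M ^ ((q - 2) / (2 * (q - 1))) * A ^ (q / (2 * (q - 1))))
        = (1/2) * (l2 + lπ) + (1/2) * (la - lb)
          + (-(q/(2*(q-1)))) * (lq - la) + ((q-2)/(2*(q-1))) * lM
          + (q/(2*(q-1))) * lA := by
      rw [Real.log_mul (by positivity) (Real.rpow_pos_of_pos hA _).ne',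
        Real.log_mul (by positivity) (Real.rpow_pos_of_pos hM _).ne',
        Real.log_mul (by positivity)
          (Real.rpow_pos_of_pos (by positivity : (0:ℝ) < q/(q-1)) _).ne',
        Real.log_mul (Real.rpow_pos_of_pos (by positivity : (0:ℝ) < 2*Real.pi) _).ne'
          (Real.rpow_pos_of_pos (by positivity : (0:ℝ) < (q-1)/(q-2)) _).ne',
        Real.log_rpow (by positivity : (0:ℝ) < 2*Real.pi),
        Real.log_rpow (by positivity : (0:ℝ) < (q-1)/(q-2)),
        Real.log_rpow (by positivity : (0:ℝ) < q/(q-1)),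
        Real.log_rpow hM, Real.log_rpow hA,
        Real.log_mul two_ne_zero hπ.ne', Real.log_div ha.ne' hb.ne',
        Real.log_div hq0.ne' ha.ne']
    rw [e1, e2, hlR]
    have hkey : (1/2) * (l2 + lπ) + (1/2) * (la - lb)
          + (-(q/(2*(q-1)))) * (lq - la) + ((q-2)/(2*(q-1))) * lM
          + (q/(2*(q-1))) * lA
        - (-(l2 + lπ) + (lM -
            (q/(2*(q-1)) * ((lq - la) + lM - ((q-1)/q * (l2 + lπ + (la - lb)) + lA)))))
        = l2 + lπ := by
      field_simp
      ring
    have hl20 : 0 ≤ l2 := Real.log_nonneg one_le_two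
    linarith
  calc (1 / (2 * Real.pi)) * (A * B ^ (1/p) + M / R)
      = (1 / (2 * Real.pi)) * (A * B ^ (1/p)) + (1 / (2 * Real.pi)) * (M / R) := by ring
    _ ≤ _ := by
        refine le_trans (add_le_add hi hii) (le_of_eq ?_)
        ring

end RieszAux

set_option maxHeartbeats 1000000 in
/-- Pointwise bound for the Riesz potential (gradient of the Newtonian potential):
for `2 < q < ∞` and `f ∈ L¹(ℝ²) ∩ L^q(ℝ²)`,
`(1/(2π)) ∫ |f(y)|/|x−y| dy ≤ C_q ‖f‖_{L¹}^{(q−2)/(2(q−1))} ‖f‖_{L^q}^{q/(2(q−1))}`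
with the explicit constant
`C_q = (2π)^{1/2} ((q−1)/(q−2))^{1/2} [(q/(q−1))^{(q−2)/(2(q−1))} + (q/(q−1))^{−q/(2(q−1))}]`. -/
theorem riesz_potential_pointwise_bound (q : ℝ) (hq : 2 < q)
    (f : EuclideanSpace ℝ (Fin 2) → ℝ)
    (hf1 : Integrable f volume)
    (hfq : MemLp f (ENNReal.ofReal q) volume) (x : EuclideanSpace ℝ (Fin 2)) :
    (1 / (2 * Real.pi)) * ∫ y, |f y| / ‖x - y‖ ≤
      ((2 * Real.pi) ^ ((1 : ℝ) / 2) * ((q - 1) / (q - 2)) ^ ((1 : ℝ) / 2) *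
          ((q / (q - 1)) ^ ((q - 2) / (2 * (q - 1))) +
            (q / (q - 1)) ^ (-(q / (2 * (q - 1)))))) *
        (∫ y, |f y|) ^ ((q - 2) / (2 * (q - 1))) *
        ((eLpNorm f (ENNReal.ofReal q) volume).toReal) ^ (q / (2 * (q - 1))) := by
  have hπ := Real.pi_pos
  have ha : 0 < q - 1 := by linarith
  have hb : 0 < q - 2 := by linarith
  have hq0 : 0 < q := by linarith
  have hfabs : AEStronglyMeasurable (fun y => |f y|) volume := by
    simpa [Real.norm_eq_abs] using hf1.1.norm
  have hnormc : Continuous (fun y : EuclideanSpace ℝ (Fin 2) => ‖x - y‖) :=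
    (continuous_const.sub continuous_id).norm
  have hmeas : AEStronglyMeasurable (fun y => |f y| / ‖x - y‖) volume := by
    have := hfabs.mul (hnormc.measurable.inv).aestronglyMeasurable
    simpa [div_eq_mul_inv, Pi.mul_def, Pi.inv_def] using this
  have hLHS : ∫ y, |f y| / ‖x - y‖
      = (∫⁻ y, ENNReal.ofReal (|f y| / ‖x - y‖) ∂volume).toReal :=
    integral_eq_lintegral_of_nonneg_ae
      (Filter.Eventually.of_forall fun y => by positivity) hmeas
  have hM0 : (0:ℝ) ≤ ∫ y, |f y| := integral_nonneg fun y => abs_nonneg _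
  have hRHS0 : (0:ℝ) ≤ ((2 * Real.pi) ^ ((1 : ℝ) / 2) * ((q - 1) / (q - 2)) ^ ((1 : ℝ) / 2) *
          ((q / (q - 1)) ^ ((q - 2) / (2 * (q - 1))) +
            (q / (q - 1)) ^ (-(q / (2 * (q - 1)))))) *
        (∫ y, |f y|) ^ ((q - 2) / (2 * (q - 1))) *
        ((eLpNorm f (ENNReal.ofReal q) volume).toReal) ^ (q / (2 * (q - 1))) := by
    have h1 : (0:ℝ) ≤ (2 * Real.pi) ^ ((1:ℝ)/2) := Real.rpow_nonneg (by positivity) _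
    have h2 : (0:ℝ) ≤ ((q-1)/(q-2)) ^ ((1:ℝ)/2) := Real.rpow_nonneg (by positivity) _
    have h3 : (0:ℝ) ≤ (q/(q-1)) ^ ((q-2)/(2*(q-1))) + (q/(q-1)) ^ (-(q/(2*(q-1)))) :=
      add_nonneg (Real.rpow_nonneg (by positivity) _) (Real.rpow_nonneg (by positivity) _)
    exact mul_nonneg (mul_nonneg (mul_nonneg (mul_nonneg h1 h2) h3)
      (Real.rpow_nonneg hM0 _)) (Real.rpow_nonneg ENNReal.toReal_nonneg _)
  by_cases hf0 : f =ᵐ[volume] 0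
  · have hz : (fun y => |f y| / ‖x - y‖) =ᵐ[volume] 0 :=
      hf0.mono fun y hy => by simp [hy]
    rw [integral_congr_ae hz]
    simpa using hRHS0
  -- nontrivial case
  set M := ∫ y, |f y| with hMdef
  set A := (eLpNorm f (ENNReal.ofReal q) volume).toReal with hAdef
  have hqc0 : (ENNReal.ofReal q) ≠ 0 := by
    simp only [ne_eq, ENNReal.ofReal_eq_zero, not_le]; linarith
  have hMpos : 0 < M := by
    rcases hM0.lt_or_eq with h | h
    · exact h
    · exact absurd (((integral_eq_zero_iff_of_nonneg
        (fun y => abs_nonneg (f y)) hf1.abs).1 h.symm).mono fun y hy => by simpa using hy)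
        hf0
  have hApos : 0 < A := by
    refine ENNReal.toReal_pos (fun h => hf0 ?_) hfq.2.ne
    exact (eLpNorm_eq_zero_iff hfq.1 hqc0).1 h
  obtain ⟨p, hp⟩ : ∃ p : ℝ, p = q / (q-1) := ⟨_, rfl⟩
  obtain ⟨K, hK⟩ : ∃ K : ℝ, K = (2 * Real.pi * ((q-1)/(q-2))) ^ ((q-1)/q) := ⟨_, rfl⟩
  obtain ⟨R, hR⟩ : ∃ R : ℝ, R = (p * M / (K * A)) ^ (q / (2*(q-1))) := ⟨_, rfl⟩
  have hp1 : 1 < p := by rw [hp, lt_div_iff₀ ha]; linarith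
  have hp2 : p < 2 := by rw [hp, div_lt_iff₀ ha]; linarith
  have hp0 : 0 < p := by linarith
  have hconj : q.HolderConjugate p := by
    rw [hp]; exact Real.HolderConjugate.conjExponent (by linarith)
  have hKpos : 0 < K := by rw [hK]; positivity
  have hRpos : 0 < R := by rw [hR]; positivity
  have hchord : (2:ℝ) ^ p ≤ 2 * p := chord_two_rpow hp1.le hp2.le
  have hdenpos : (0:ℝ) < 1 - 2 ^ p / 4 := by nlinarith
  obtain ⟨Bv, hBv⟩ : ∃ Bv : ℝ, Bv = Real.pi * R ^ (2-p) * 2 ^ p / (1 - 2 ^ p / 4) := ⟨_, rfl⟩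
  have hBvpos : 0 < Bv := by rw [hBv]; positivity
  -- lintegral bounds
  have hL1 : ∫⁻ y, ENNReal.ofReal |f y| ∂volume = ENNReal.ofReal M := by
    rw [hMdef]
    exact (ofReal_integral_eq_lintegral_ofReal hf1.abs
      (Filter.Eventually.of_forall fun y => abs_nonneg _)).symm
  have hGmeas : Measurable (fun y : EuclideanSpace ℝ (Fin 2) =>
      (ENNReal.ofReal ‖x - y‖)⁻¹) := (hnormc.measurable.ennreal_ofReal).inv
  have hFaem : AEMeasurable (fun y => ENNReal.ofReal |f y|) volume :=
    ENNReal.measurable_ofReal.comp_aemeasurable hfabs.aemeasurable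
  have hnear : (∫⁻ y in ball x R, ENNReal.ofReal (|f y| / ‖x - y‖) ∂volume)
      ≤ ENNReal.ofReal (A * Bv ^ (1/p)) := by
    have hpt : ∀ y, ENNReal.ofReal (|f y| / ‖x - y‖)
        ≤ ((fun y => ENNReal.ofReal |f y|) * fun y => (ENNReal.ofReal ‖x - y‖)⁻¹) y := by
      intro y
      rcases eq_or_lt_of_le (norm_nonneg (x - y)) with h0 | h0
      · simp [← h0]
      · simp only [Pi.mul_apply]
        rw [div_eq_mul_inv, ENNReal.ofReal_mul (abs_nonneg _),
          ENNReal.ofReal_inv_of_pos h0]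
    have h1 : (∫⁻ y in ball x R, (ENNReal.ofReal |f y|) ^ q ∂volume) ^ (1/q)
        ≤ ENNReal.ofReal A := by
      have hle : (∫⁻ y in ball x R, (ENNReal.ofReal |f y|) ^ q ∂volume)
          ≤ ∫⁻ y, (ENNReal.ofReal |f y|) ^ q ∂volume :=
        lintegral_mono' Measure.restrict_le_self le_rfl
      have heq : (∫⁻ y, (ENNReal.ofReal |f y|) ^ q ∂volume) ^ (1/q)
          = eLpNorm f (ENNReal.ofReal q) volume := by
        rw [eLpNorm_eq_lintegral_rpow_enorm_toReal hqc0 ENNReal.ofReal_ne_top,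
          ENNReal.toReal_ofReal hq0.le, one_div]
        congr 1
        refine lintegral_congr fun y => ?_
        rw [← ofReal_norm_eq_enorm, Real.norm_eq_abs]
      calc (∫⁻ y in ball x R, (ENNReal.ofReal |f y|) ^ q ∂volume) ^ (1/q)
          ≤ (∫⁻ y, (ENNReal.ofReal |f y|) ^ q ∂volume) ^ (1/q) :=
            ENNReal.rpow_le_rpow hle (by positivity)
        _ = eLpNorm f (ENNReal.ofReal q) volume := heq
        _ = ENNReal.ofReal A := by rw [hAdef, ENNReal.ofReal_toReal hfq.2.ne]
    have h2 : (∫⁻ y in ball x R, ((ENNReal.ofReal ‖x - y‖)⁻¹) ^ p ∂volume) ^ (1/p)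
        ≤ ENNReal.ofReal (Bv ^ (1/p)) := by
      calc (∫⁻ y in ball x R, ((ENNReal.ofReal ‖x - y‖)⁻¹) ^ p ∂volume) ^ (1/p)
          ≤ (ENNReal.ofReal (Real.pi * R ^ (2-p) * 2 ^ p / (1 - 2 ^ p / 4))) ^ (1/p) :=
            ENNReal.rpow_le_rpow (kernel_bound hRpos hp1 hp2 x) (by positivity)
        _ = ENNReal.ofReal (Bv ^ (1/p)) := by
            rw [← hBv, ← ENNReal.ofReal_rpow_of_pos hBvpos]
    calc (∫⁻ y in ball x R, ENNReal.ofReal (|f y| / ‖x - y‖) ∂volume)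
        ≤ ∫⁻ y in ball x R, ((fun y => ENNReal.ofReal |f y|)
            * fun y => (ENNReal.ofReal ‖x - y‖)⁻¹) y ∂volume := lintegral_mono hpt
      _ ≤ (∫⁻ y in ball x R, (ENNReal.ofReal |f y|) ^ q ∂volume) ^ (1/q)
          * (∫⁻ y in ball x R, ((ENNReal.ofReal ‖x - y‖)⁻¹) ^ p ∂volume) ^ (1/p) :=
            ENNReal.lintegral_mul_le_Lp_mul_Lq _ hconj hFaem.restrict
              hGmeas.aemeasurable.restrict
      _ ≤ ENNReal.ofReal A * ENNReal.ofReal (Bv ^ (1/p)) := mul_le_mul' h1 h2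
      _ = ENNReal.ofReal (A * Bv ^ (1/p)) := (ENNReal.ofReal_mul hApos.le).symm
  have hfar : (∫⁻ y in (ball x R)ᶜ, ENNReal.ofReal (|f y| / ‖x - y‖) ∂volume)
      ≤ ENNReal.ofReal (M / R) := by
    have hae : ∀ᵐ y ∂(volume.restrict (ball x R)ᶜ),
        ENNReal.ofReal (|f y| / ‖x - y‖) ≤ ENNReal.ofReal |f y| * ENNReal.ofReal R⁻¹ := by
      refine (ae_restrict_mem measurableSet_ball.compl).mono fun y hy => ?_
      have hxy : R ≤ ‖x - y‖ := by
        rw [mem_compl_iff, mem_ball, not_lt, dist_eq_norm] at hy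
        rwa [norm_sub_rev]
      rw [← ENNReal.ofReal_mul (abs_nonneg _)]
      apply ENNReal.ofReal_le_ofReal
      rw [← div_eq_mul_inv]
      exact div_le_div_of_nonneg_left (abs_nonneg _) hRpos hxy
    calc (∫⁻ y in (ball x R)ᶜ, ENNReal.ofReal (|f y| / ‖x - y‖) ∂volume)
        ≤ ∫⁻ y in (ball x R)ᶜ, ENNReal.ofReal |f y| * ENNReal.ofReal R⁻¹ ∂volume :=
          lintegral_mono_ae hae
      _ = (∫⁻ y in (ball x R)ᶜ, ENNReal.ofReal |f y| ∂volume) * ENNReal.ofReal R⁻¹ :=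
          lintegral_mul_const' _ _ ENNReal.ofReal_ne_top
      _ ≤ (∫⁻ y, ENNReal.ofReal |f y| ∂volume) * ENNReal.ofReal R⁻¹ :=
          mul_le_mul_left (lintegral_mono' Measure.restrict_le_self le_rfl) _
      _ = ENNReal.ofReal M * ENNReal.ofReal R⁻¹ := by rw [hL1]
      _ = ENNReal.ofReal (M / R) := by
          rw [← ENNReal.ofReal_mul hMpos.le, div_eq_mul_inv]
  have htotal : (∫⁻ y, ENNReal.ofReal (|f y| / ‖x - y‖) ∂volume)
      ≤ ENNReal.ofReal (A * Bv ^ (1/p) + M / R) := by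
    rw [← lintegral_add_compl (fun y => ENNReal.ofReal (|f y| / ‖x - y‖))
      (measurableSet_ball (x := x) (ε := R)) (μ := volume)]
    calc (∫⁻ y in ball x R, ENNReal.ofReal (|f y| / ‖x - y‖) ∂volume)
        + (∫⁻ y in (ball x R)ᶜ, ENNReal.ofReal (|f y| / ‖x - y‖) ∂volume)
        ≤ ENNReal.ofReal (A * Bv ^ (1/p)) + ENNReal.ofReal (M / R) := add_le_add hnear hfar
      _ = ENNReal.ofReal (A * Bv ^ (1/p) + M / R) :=
          (ENNReal.ofReal_add (by positivity) (by positivity)).symm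
  rw [hLHS]
  have hto : (∫⁻ y, ENNReal.ofReal (|f y| / ‖x - y‖) ∂volume).toReal
      ≤ A * Bv ^ (1/p) + M / R :=
    ENNReal.toReal_le_of_le_ofReal (by positivity) htotal
  calc (1 / (2 * Real.pi)) * (∫⁻ y, ENNReal.ofReal (|f y| / ‖x - y‖) ∂volume).toReal
      ≤ (1 / (2 * Real.pi)) * (A * Bv ^ (1/p) + M / R) := by
        exact mul_le_mul_of_nonneg_left hto (by positivity)
    _ ≤ _ := real_side hq hApos hMpos hp hK hR hBv
end

section
/- Let g : ℝ² → [0,∞) be measurable with ∫_{ℝ²} g(x)(1 + ln(1+|x|²)) dx < ∞. Then the function x ↦ g(x) ln⁻ g(x) is integrable on ℝ², and ∫_{ℝ²} g(x) ln⁻ g(x) dx ≤ 2 ∫_{ℝ²} g(x) ln(1+|x|²) dx + (ln π) ∫_{ℝ²} g(x) dx + 1/e. -/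
open MeasureTheory
open scoped ENNReal
open Set

-- integral over Ioi 0 of y/(1+y^2)^2
lemma lemA : ∫ y in Ioi (0:ℝ), y * ((1 + y ^ 2) ^ 2)⁻¹ = 1 / 2 := by
  have hderiv : ∀ y ∈ Ioi (0:ℝ),
      HasDerivAt (fun y : ℝ => -((2 * (1 + y ^ 2)))⁻¹) (y * ((1 + y ^ 2) ^ 2)⁻¹) y := by
    intro y _
    have h1 : HasDerivAt (fun y : ℝ => 2 * (1 + y ^ 2)) (2 * (2 * y)) y := by
      have := ((hasDerivAt_pow 2 y).const_add 1).const_mul (2:ℝ)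
      simpa using this
    have hne : (2 * (1 + y ^ 2) : ℝ) ≠ 0 := by positivity
    have h2 := (h1.inv hne).neg
    refine h2.congr_deriv ?_
    field_simp
  have hpos : ∀ y ∈ Ioi (0:ℝ), 0 ≤ y * ((1 + y ^ 2) ^ 2)⁻¹ := by
    intro y hy; have : (0:ℝ) < y := hy; positivity
  have htend : Filter.Tendsto (fun y : ℝ => -((2 * (1 + y ^ 2)))⁻¹) Filter.atTop (nhds 0) := by
    rw [show (0:ℝ) = -0 by ring]
    apply Filter.Tendsto.neg
    apply Filter.Tendsto.inv_tendsto_atTop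
    have : Filter.Tendsto (fun y : ℝ => y ^ 2) Filter.atTop Filter.atTop :=
      Filter.tendsto_pow_atTop (by norm_num)
    have h2 := Filter.tendsto_atTop_add_const_left Filter.atTop (1:ℝ) this
    simpa using h2.const_mul_atTop (by norm_num : (0:ℝ) < 2)
  have hcont : ContinuousWithinAt (fun y : ℝ => -((2 * (1 + y ^ 2)))⁻¹) (Ici 0) 0 := by
    apply Continuous.continuousWithinAt
    fun_prop (disch := intro x; positivity)
  have := integral_Ioi_of_hasDerivAt_of_nonneg hcont hderiv hpos htend
  rw [this]; norm_num

noncomputable def mfun (x : EuclideanSpace ℝ (Fin 2)) : ℝ := (Real.pi * (1 + ‖x‖ ^ 2) ^ 2)⁻¹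

lemma vol_ball : (volume (Metric.ball (0 : EuclideanSpace ℝ (Fin 2)) 1)).toReal = Real.pi := by
  rw [EuclideanSpace.volume_ball]
  have h2 : Real.Gamma (1 + 1) = 1 := by
    rw [show (1+1:ℝ) = 2 by norm_num, Real.Gamma_two]
  simp [h2, Real.sq_sqrt Real.pi_nonneg, ENNReal.toReal_ofReal Real.pi_nonneg]

lemma integral_mfun : ∫ x, mfun x = 1 := by
  have hdim : Module.finrank ℝ (EuclideanSpace ℝ (Fin 2)) = 2 := by
    simp [finrank_euclideanSpace]
  have := MeasureTheory.integral_fun_norm_addHaar (volume : Measure (EuclideanSpace ℝ (Fin 2)))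
    (fun r : ℝ => (Real.pi * (1 + r ^ 2) ^ 2)⁻¹)
  rw [hdim] at this
  unfold mfun
  rw [this, measureReal_def, vol_ball]
  have : ∫ y in Ioi (0:ℝ), y ^ (2 - 1) • (Real.pi * (1 + y ^ 2) ^ 2)⁻¹
      = Real.pi⁻¹ * ∫ y in Ioi (0:ℝ), y * ((1 + y ^ 2) ^ 2)⁻¹ := by
    rw [← integral_const_mul]
    congr 1; ext y
    rw [mul_inv]
    simp; ring
  rw [this, lemA]
  have hπ := Real.pi_pos
  field_simp
  ring
  exact mul_inv_cancel₀ hπ.ne'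

lemma integrable_mfun : Integrable mfun := by
  have h4 : ((Module.finrank ℝ (EuclideanSpace ℝ (Fin 2)) : ℝ)) < 4 := by
    simp [finrank_euclideanSpace]; norm_num
  have := integrable_rpow_neg_one_add_norm_sq (μ := (volume : Measure (EuclideanSpace ℝ (Fin 2)))) h4
  have heq : ∀ x : EuclideanSpace ℝ (Fin 2),
      ((1 : ℝ) + ‖x‖ ^ 2) ^ (-(4:ℝ) / 2) = ((1 + ‖x‖ ^ 2) ^ 2)⁻¹ := by
    intro x
    have h0 : (0:ℝ) < 1 + ‖x‖ ^ 2 := by positivity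
    rw [show (-(4:ℝ)/2) = -(2:ℕ) by norm_num, Real.rpow_neg h0.le, Real.rpow_natCast]
  have h2 : Integrable (fun x : EuclideanSpace ℝ (Fin 2) => ((1 + ‖x‖ ^ 2) ^ 2)⁻¹) := by
    refine this.congr (Filter.Eventually.of_forall fun x => ?_)
    exact heq x
  have := h2.const_mul (Real.pi⁻¹)
  refine this.congr (Filter.Eventually.of_forall fun x => ?_)
  unfold mfun
  rw [mul_inv]

lemma log_le_div_exp {u : ℝ} (hu : 0 < u) : Real.log u ≤ u / Real.exp 1 := by
  have h1 : Real.log (u / Real.exp 1) ≤ u / Real.exp 1 - 1 :=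
    Real.log_le_sub_one_of_pos (by positivity)
  have h2 : Real.log (u / Real.exp 1) = Real.log u - 1 := by
    rw [Real.log_div hu.ne' (Real.exp_pos 1).ne', Real.log_exp]
  linarith

/-- Control of the negative part of the entropy: if `g ≥ 0` on `ℝ²` satisfies
`∫ g (1 + ln(1+|x|²)) < ∞`, then `g ln⁻ g` is integrable and
`∫ g ln⁻ g ≤ 2 ∫ g ln(1+|x|²) + ln π ∫ g + 1/e`, where `ln⁻ s = max(−ln s, 0)`. -/
theorem entropy_negative_part_control (g : EuclideanSpace ℝ (Fin 2) → ℝ)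
    (hmeas : Measurable g) (hnonneg : ∀ x, 0 ≤ g x)
    (hint : Integrable (fun x => g x * (1 + Real.log (1 + ‖x‖ ^ 2))) volume) :
    Integrable (fun x => g x * max (-Real.log (g x)) 0) volume ∧
    (∫ x, g x * max (-Real.log (g x)) 0) ≤
      2 * (∫ x, g x * Real.log (1 + ‖x‖ ^ 2)) + Real.log Real.pi * (∫ x, g x) +
        1 / Real.exp 1 := by
  have hLnn : ∀ x : EuclideanSpace ℝ (Fin 2), 0 ≤ Real.log (1 + ‖x‖ ^ 2) := fun x =>
    Real.log_nonneg (by nlinarith [sq_nonneg ‖x‖])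
  have hlogpi : 0 ≤ Real.log Real.pi :=
    Real.log_nonneg (by linarith [Real.pi_gt_three])
  -- pointwise bound
  have hpt : ∀ x, g x * max (-Real.log (g x)) 0 ≤
      (1 / Real.exp 1) * mfun x +
        (Real.log Real.pi * g x + 2 * (g x * Real.log (1 + ‖x‖ ^ 2))) := by
    intro x
    have hM : 0 < mfun x := by unfold mfun; positivity
    have hL := hLnn x
    rcases eq_or_lt_of_le (hnonneg x) with h0 | hG
    · rw [← h0]
      have : (0:ℝ) < 1 / Real.exp 1 := by positivity
      nlinarith
    · have hlogM : Real.log (mfun x) =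
          -(Real.log Real.pi + 2 * Real.log (1 + ‖x‖ ^ 2)) := by
        unfold mfun
        rw [Real.log_inv, Real.log_mul Real.pi_ne_zero (by positivity), Real.log_pow]
        push_cast; ring
      have hsplit : -Real.log (g x) =
          Real.log (mfun x / g x) + (Real.log Real.pi + 2 * Real.log (1 + ‖x‖ ^ 2)) := by
        rw [Real.log_div hM.ne' hG.ne', hlogM]; ring
      have hCnn : 0 ≤ Real.log Real.pi + 2 * Real.log (1 + ‖x‖ ^ 2) := by linarith
      have hmax : max (-Real.log (g x)) 0 ≤
          max (Real.log (mfun x / g x)) 0 +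
            (Real.log Real.pi + 2 * Real.log (1 + ‖x‖ ^ 2)) := by
        rw [hsplit]
        refine max_le (add_le_add (le_max_left _ _) le_rfl) ?_
        have := le_max_right (Real.log (mfun x / g x)) 0
        linarith
      have hstep : g x * max (Real.log (mfun x / g x)) 0 ≤ (1 / Real.exp 1) * mfun x := by
        have hu : 0 < mfun x / g x := by positivity
        have h1 : max (Real.log (mfun x / g x)) 0 ≤ (mfun x / g x) / Real.exp 1 :=
          max_le (log_le_div_exp hu) (by positivity)
        calc g x * max (Real.log (mfun x / g x)) 0
            ≤ g x * ((mfun x / g x) / Real.exp 1) := by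
              exact mul_le_mul_of_nonneg_left h1 hG.le
          _ = (1 / Real.exp 1) * mfun x := by field_simp
      have := mul_le_mul_of_nonneg_left hmax hG.le
      nlinarith
  -- integrability pieces
  have hg1 : Integrable g := by
    refine hint.mono' hmeas.aestronglyMeasurable (Filter.Eventually.of_forall fun x => ?_)
    rw [Real.norm_eq_abs, abs_of_nonneg (hnonneg x)]
    nlinarith [hnonneg x, hLnn x]
  have hgL : Integrable (fun x => g x * Real.log (1 + ‖x‖ ^ 2)) := by
    refine hint.mono' ?_ (Filter.Eventually.of_forall fun x => ?_)
    · exact (hmeas.mul ((Real.measurable_log.comp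
        ((measurable_const.add (measurable_norm.pow measurable_const)))))).aestronglyMeasurable
    · rw [Real.norm_eq_abs, abs_of_nonneg (mul_nonneg (hnonneg x) (hLnn x))]
      nlinarith [hnonneg x, hLnn x]
  have hB : Integrable (fun x => Real.log Real.pi * g x +
      2 * (g x * Real.log (1 + ‖x‖ ^ 2))) :=
    (hg1.const_mul _).add (hgL.const_mul _)
  have hC : Integrable (fun x => (1 / Real.exp 1) * mfun x +
      (Real.log Real.pi * g x + 2 * (g x * Real.log (1 + ‖x‖ ^ 2)))) :=
    (integrable_mfun.const_mul _).add hB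
  have hFmeas : Measurable (fun x => g x * max (-Real.log (g x)) 0) :=
    hmeas.mul (((Real.measurable_log.comp hmeas).neg).max measurable_const)
  have hFint : Integrable (fun x => g x * max (-Real.log (g x)) 0) := by
    refine hC.mono' hFmeas.aestronglyMeasurable (Filter.Eventually.of_forall fun x => ?_)
    rw [Real.norm_eq_abs, abs_of_nonneg (mul_nonneg (hnonneg x) (le_max_right _ _))]
    exact hpt x
  refine ⟨hFint, ?_⟩
  have hmono := integral_mono hFint hC (fun x => hpt x)
  have heq : ∫ x, ((1 / Real.exp 1) * mfun x +
      (Real.log Real.pi * g x + 2 * (g x * Real.log (1 + ‖x‖ ^ 2)))) =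
      (1 / Real.exp 1) * (∫ x, mfun x) +
        (Real.log Real.pi * (∫ x, g x) + 2 * (∫ x, g x * Real.log (1 + ‖x‖ ^ 2))) := by
    rw [integral_add (integrable_mfun.const_mul _) hB,
      integral_add (hg1.const_mul _) (hgL.const_mul _),
      integral_const_mul, integral_const_mul, integral_const_mul]
  rw [heq, integral_mfun] at hmono
  linarith
end

section
/- Let g : ℝ² → [0,∞) be measurable with ∫_{ℝ²} g(x)(1 + ln(1+|x|²)) dx < ∞ and ∫_{ℝ²} g(x) ln⁺ g(x) dx < ∞. Then x ↦ g(x) ln g(x) is integrable on ℝ² and ∫_{ℝ²} g(x) ln g(x) dx ≥ −2 ∫_{ℝ²} g(x) ln(1+|x|²) dx − (ln π) ∫_{ℝ²} g(x) dx − 1/e. -/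
open MeasureTheory Set Filter
open scoped ENNReal Topology

section aux

lemma radial_integral' : ∫ r in Set.Ioi (0:ℝ), r * ((1 + r^2)^2)⁻¹ = 1/2 := by
  have h : ∀ x ∈ Set.Ici (0:ℝ), HasDerivAt (fun r : ℝ => -(2*(1+r^2))⁻¹)
      (x * ((1+x^2)^2)⁻¹) x := by
    intro x _
    have h1 : HasDerivAt (fun r : ℝ => 2*(1+r^2)) (2*(2*x)) x := by
      have := ((hasDerivAt_pow 2 x).const_add 1).const_mul 2
      simpa using this
    have h2 := (h1.inv (by positivity)).neg
    refine h2.congr_deriv ?_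
    field_simp
  have tend : Tendsto (fun r : ℝ => -(2*(1+r^2))⁻¹) atTop (𝓝 0) := by
    rw [show (0:ℝ) = -0 by ring]
    apply Tendsto.neg
    apply Tendsto.inv_tendsto_atTop
    apply Tendsto.const_mul_atTop (by norm_num : (0:ℝ) < 2)
    exact tendsto_atTop_add_const_left _ _ (tendsto_pow_atTop (by norm_num))
  have := MeasureTheory.integral_Ioi_of_hasDerivAt_of_nonneg' h
    (fun x hx => by have := hx.out.le; positivity) tend
  rw [this]; norm_num

lemma key_integral' :
    ∫ x : EuclideanSpace ℝ (Fin 2), ((1 + ‖x‖^2)^2)⁻¹ = Real.pi := by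
  have := MeasureTheory.integral_fun_norm_addHaar
    (volume : Measure (EuclideanSpace ℝ (Fin 2))) (fun r : ℝ => ((1+r^2)^2)⁻¹)
  rw [finrank_euclideanSpace_fin] at this
  rw [show (fun x : EuclideanSpace ℝ (Fin 2) => ((1+‖x‖^2)^2)⁻¹)
      = (fun x => (fun r : ℝ => ((1+r^2)^2)⁻¹) ‖x‖) from rfl] at *
  rw [this, measureReal_def, EuclideanSpace.volume_ball]
  have h2 : Real.Gamma ((Fintype.card (Fin 2) : ℝ)/2 + 1) = 1 := by
    norm_num
  rw [h2]
  simp only [Fintype.card_fin, smul_eq_mul]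
  rw [Real.sq_sqrt Real.pi_nonneg]
  rw [show (2:ℕ)-1 = 1 by norm_num]
  simp only [pow_one, smul_eq_mul]
  rw [radial_integral']
  rw [ENNReal.ofReal_one, one_pow, one_mul, div_one, ENNReal.toReal_ofReal Real.pi_nonneg,
    nsmul_eq_mul]
  push_cast
  ring

lemma m_integrable' :
    Integrable (fun x : EuclideanSpace ℝ (Fin 2) => ((1 + ‖x‖^2)^2)⁻¹) := by
  have h4 : ((Module.finrank ℝ (EuclideanSpace ℝ (Fin 2)) : ℝ)) < 4 := by
    rw [finrank_euclideanSpace_fin]; norm_num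
  have h := (integrable_one_add_norm (E := EuclideanSpace ℝ (Fin 2))
    (μ := volume) h4).const_mul 4
  have hmeas : Measurable (fun x : EuclideanSpace ℝ (Fin 2) => ((1 + ‖x‖^2)^2)⁻¹) := by
    measurability
  apply h.mono' hmeas.aestronglyMeasurable
  filter_upwards with x
  have hx : (0:ℝ) ≤ ‖x‖ := norm_nonneg x
  have h1 : (1 + ‖x‖) ^ (-4 : ℝ) = ((1 + ‖x‖)^(4:ℕ))⁻¹ := by
    rw [← Real.rpow_natCast (1 + ‖x‖) 4, ← Real.rpow_neg (by positivity)]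
    norm_num
  rw [Real.norm_eq_abs, abs_of_nonneg (by positivity), h1]
  have key : (1 + ‖x‖)^(4:ℕ) ≤ 4 * (1 + ‖x‖^2)^2 := by nlinarith [sq_nonneg (1 - ‖x‖)]
  calc ((1 + ‖x‖^2)^2)⁻¹ ≤ ((1 + ‖x‖)^(4:ℕ) / 4)⁻¹ := by
        gcongr
        linarith
    _ = 4 * ((1 + ‖x‖)^(4:ℕ))⁻¹ := by rw [inv_div, div_eq_mul_inv]

lemma entropy_pointwise' {s t : ℝ} (hs : 0 ≤ s) (ht : 0 < t) :
    s * Real.log t - t / Real.exp 1 ≤ s * Real.log s := by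
  rcases eq_or_lt_of_le hs with h | h
  · rw [← h]
    simp
    positivity
  · have hlog := Real.log_le_sub_one_of_pos (show 0 < t / (Real.exp 1 * s) by positivity)
    rw [Real.log_div (by positivity) (by positivity),
      Real.log_mul (Real.exp_ne_zero 1) h.ne', Real.log_exp] at hlog
    have h2 := mul_le_mul_of_nonneg_left (sub_le_iff_le_add.mp hlog) hs
    have h3 : s * (t / (Real.exp 1 * s)) = t / Real.exp 1 := by
      field_simp
    nlinarith

end aux

/-- Lower bound for the entropy: if `g ≥ 0` on `ℝ²` satisfies
`∫ g (1 + ln(1+|x|²)) < ∞` and `∫ g ln⁺ g < ∞`, then `g ln g` is integrable and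
`∫ g ln g ≥ −2 ∫ g ln(1+|x|²) − (ln π) ∫ g − 1/e`. -/
theorem entropy_lower_bound (g : EuclideanSpace ℝ (Fin 2) → ℝ)
    (hmeas : Measurable g) (hnonneg : ∀ x, 0 ≤ g x)
    (hint : Integrable (fun x => g x * (1 + Real.log (1 + ‖x‖ ^ 2))) volume)
    (hent : Integrable (fun x => g x * max (Real.log (g x)) 0) volume) :
    Integrable (fun x => g x * Real.log (g x)) volume ∧
    (∫ x, g x * Real.log (g x)) ≥
      -(2 * (∫ x, g x * Real.log (1 + ‖x‖ ^ 2))) - Real.log Real.pi * (∫ x, g x) -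
        1 / Real.exp 1 := by
  have hnorm : ∀ x : EuclideanSpace ℝ (Fin 2), (0:ℝ) < 1 + ‖x‖^2 := fun x => by positivity
  have hL0 : ∀ x : EuclideanSpace ℝ (Fin 2), 0 ≤ Real.log (1 + ‖x‖^2) := fun x =>
    Real.log_nonneg (by nlinarith [sq_nonneg ‖x‖])
  -- g is integrable
  have hg : Integrable g volume := by
    apply hint.mono' hmeas.aestronglyMeasurable
    filter_upwards with x
    rw [Real.norm_eq_abs, abs_of_nonneg (hnonneg x)]
    nlinarith [hnonneg x, hL0 x]
  -- g * log(1+‖x‖²) is integrable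
  have hglog : Integrable (fun x : EuclideanSpace ℝ (Fin 2) =>
      g x * Real.log (1 + ‖x‖^2)) volume := by
    apply (hint.sub hg).congr
    filter_upwards with x
    simp only [Pi.sub_apply]
    ring
  -- the reference density m
  set m : EuclideanSpace ℝ (Fin 2) → ℝ :=
    fun x => Real.pi⁻¹ * ((1 + ‖x‖^2)^2)⁻¹ with hm_def
  have hm_pos : ∀ x, 0 < m x := fun x => by
    have := hnorm x
    have := Real.pi_pos
    positivity
  have hm_int : Integrable m volume := m_integrable'.const_mul _
  have hm_val : ∫ x, m x = 1 := by
    rw [hm_def]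
    rw [integral_const_mul, key_integral', inv_mul_cancel₀ Real.pi_pos.ne']
  have hlogm : ∀ x, Real.log (m x) = -Real.log Real.pi - 2 * Real.log (1 + ‖x‖^2) := by
    intro x
    rw [hm_def]
    rw [Real.log_mul (inv_ne_zero Real.pi_pos.ne') (by positivity), Real.log_inv,
      Real.log_inv, Real.log_pow]
    push_cast
    ring
  -- the comparison function φ
  set φ : EuclideanSpace ℝ (Fin 2) → ℝ := fun x => ((-Real.log Real.pi) * g x +
      (-2) * (g x * Real.log (1 + ‖x‖^2))) + (-(Real.exp 1)⁻¹) * m x with hφ_def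
  have I1 : Integrable (fun x : EuclideanSpace ℝ (Fin 2) => (-Real.log Real.pi) * g x +
      (-2) * (g x * Real.log (1 + ‖x‖^2))) volume := (hg.const_mul _).add (hglog.const_mul _)
  have I2 : Integrable (fun x : EuclideanSpace ℝ (Fin 2) =>
      (-(Real.exp 1)⁻¹) * m x) volume := hm_int.const_mul _
  have hφ_int : Integrable φ volume := I1.add I2
  have hφ_le : ∀ x, φ x ≤ g x * Real.log (g x) := by
    intro x
    have h := entropy_pointwise' (hnonneg x) (hm_pos x)
    rw [hlogm x] at h
    calc φ x = g x * (-Real.log Real.pi - 2 * Real.log (1 + ‖x‖^2))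
        - m x / Real.exp 1 := by rw [hφ_def]; field_simp; ring
      _ ≤ g x * Real.log (g x) := h
  -- integrability of g log g
  have hdiff : Integrable (fun x : EuclideanSpace ℝ (Fin 2) =>
      g x * max (Real.log (g x)) 0 - g x * Real.log (g x)) volume := by
    apply (hent.sub hφ_int).mono'
    · apply Measurable.aestronglyMeasurable
      apply Measurable.sub
      · exact hmeas.mul ((Real.measurable_log.comp hmeas).max measurable_const)
      · exact hmeas.mul (Real.measurable_log.comp hmeas)
    · filter_upwards with x
      have h1 : g x * Real.log (g x) ≤ g x * max (Real.log (g x)) 0 :=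
        mul_le_mul_of_nonneg_left (le_max_left _ _) (hnonneg x)
      rw [Real.norm_eq_abs, abs_of_nonneg (by linarith)]
      have h2 := hφ_le x
      simp only [Pi.sub_apply]
      linarith
  have hint_glng : Integrable (fun x : EuclideanSpace ℝ (Fin 2) =>
      g x * Real.log (g x)) volume := by
    apply (hent.sub hdiff).congr
    filter_upwards with x
    simp only [Pi.sub_apply]
    ring
  refine ⟨hint_glng, ?_⟩
  have hmono : ∫ x, φ x ≤ ∫ x, g x * Real.log (g x) :=
    integral_mono hφ_int hint_glng hφ_le
  have hφ_val : ∫ x, φ x = -(2 * (∫ x, g x * Real.log (1 + ‖x‖ ^ 2))) -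
      Real.log Real.pi * (∫ x, g x) - 1 / Real.exp 1 := by
    rw [hφ_def]
    rw [integral_add I1 I2, integral_add (hg.const_mul _) (hglog.const_mul _),
      integral_const_mul, integral_const_mul, integral_const_mul, hm_val]
    field_simp
    ring
  rw [ge_iff_le, ← hφ_val]
  exact hmono
end
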